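/- Let t, t' : Fin n → k and let D, D' : A → A be k-linear maps satisfying the graded Leibniz rule with D(x_i) = x_i * w_t and D'(x_i) = x_i * w_{t'} for all i ∈ Fin n. Then there exists a k-algebra automorphism f : A ≃ₐ[k] A with each f(x_i) homogeneous of degree 1 and f ∘ D = D' ∘ f if and only if (t = 0 ↔ t' = 0). In particular, up to DG isomorphism there are exactly two DG polynomial algebras: the one with t = 0 and the one with t = (1,0,…,0). -/

import Mathlib

open MvPolynomial

section Aux

lemma sigma_homog {k : Type*} [CommRing k] {n : ℕ} {d : ℕ} {h : MvPolynomial (Fin n) k}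
    (hh : h.IsHomogeneous d) :
    aeval (fun i : Fin n => -X i) h = ((-1 : k) ^ d) • h := by
  have key : ∀ u ∈ h.support,
      aeval (fun i : Fin n => -X i) (monomial u (coeff u h))
        = ((-1 : k) ^ d) • monomial u (coeff u h) := by
    intro u hu
    rw [aeval_monomial]
    have hdeg : (u.sum fun _ e => e) = d := by
      have := hh (mem_support_iff.mp hu)
      simpa [Finsupp.weight, Finsupp.linearCombination, Finsupp.sum] using this
    have : (u.prod fun i e => (-X i : MvPolynomial (Fin n) k) ^ e)
        = ((-1 : MvPolynomial (Fin n) k) ^ d) * u.prod fun i e => (X i) ^ e := by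
      rw [Finsupp.prod, Finsupp.prod, ← hdeg, Finsupp.sum,
        ← Finset.prod_pow_eq_pow_sum, ← Finset.prod_mul_distrib]
      exact Finset.prod_congr rfl fun i _ => by rw [neg_pow]
    rw [this, smul_eq_C_mul, monomial_eq, algebraMap_eq, map_pow, map_neg, map_one]
    ring
  calc aeval (fun i : Fin n => -X i) h
      = ∑ u ∈ h.support, aeval (fun i : Fin n => -X i) (monomial u (coeff u h)) := by
        conv_lhs => rw [h.as_sum]
        exact map_sum _ _ _
    _ = ∑ u ∈ h.support, ((-1 : k) ^ d) • monomial u (coeff u h) :=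
        Finset.sum_congr rfl key
    _ = ((-1 : k) ^ d) • h := by rw [← Finset.smul_sum, ← h.as_sum]

lemma D_char {k : Type*} [Field k] [CharZero k] {n : ℕ} (t : Fin n → k)
    (D : MvPolynomial (Fin n) k →ₗ[k] MvPolynomial (Fin n) k)
    (hLeib : ∀ (d : ℕ) (a b : MvPolynomial (Fin n) k), a.IsHomogeneous d →
      D (a * b) = D a * b + ((-1 : k) ^ d) • (a * D b))
    (hD : ∀ i : Fin n, D (X i) = X i * ∑ j : Fin n, t j • X j) :
    ∀ a : MvPolynomial (Fin n) k,
      D a = (2⁻¹ : k) • ((∑ j : Fin n, t j • X j) *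
        (a - aeval (fun i : Fin n => -X i) a)) := by
  set w : MvPolynomial (Fin n) k := ∑ j : Fin n, t j • X j with hw
  have hD1 : D 1 = 0 := by
    have := hLeib 0 1 1 (isHomogeneous_one _ _)
    simpa using this
  intro a
  induction a using MvPolynomial.induction_on with
  | C c =>
    have : (C c : MvPolynomial (Fin n) k) = c • 1 := by
      rw [smul_eq_C_mul, mul_one]
    rw [this, map_smul, hD1, smul_zero, map_smul, map_one]
    simp
  | add p q hp hq =>
    rw [map_add, hp, hq, map_add]
    rw [smul_eq_C_mul, smul_eq_C_mul, smul_eq_C_mul]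
    ring
  | mul_X p i hp =>
    rw [mul_comm p (X i), hLeib 1 (X i) p (isHomogeneous_X _ _), hD i, hp, map_mul,
      aeval_X]
    rw [smul_eq_C_mul, smul_eq_C_mul, smul_eq_C_mul]
    have h2 : (C ((-1 : k) ^ 1) : MvPolynomial (Fin n) k) = -1 := by
      rw [pow_one, map_neg, map_one]
    have h3 : (C (2⁻¹ : k) : MvPolynomial (Fin n) k) * 2 = 1 := by
      rw [show (2 : MvPolynomial (Fin n) k) = C 2 by rw [map_ofNat], ← map_mul]
      norm_num
    rw [h2]
    linear_combination (-(X i * w * p)) * h3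

lemma w_zero {k : Type*} [CommRing k] [Nontrivial k] [NoZeroDivisors k] {n : ℕ} (t : Fin n → k) :
    (∑ j : Fin n, t j • (X j : MvPolynomial (Fin n) k)) = 0 ↔ t = 0 := by
  constructor
  · intro h
    funext i
    have := congrArg (coeff (Finsupp.single i 1)) h
    simpa [coeff_sum, coeff_smul, coeff_X', Finsupp.single_left_inj,
      Finset.sum_ite_eq', eq_comm] using this
  · intro h; simp [h]

lemma exists_lequiv {k : Type*} [Field k] {n : ℕ} {t t' : Fin n → k}
    (ht : t ≠ 0) (ht' : t' ≠ 0) :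
    ∃ g : (Fin n → k) ≃ₗ[k] (Fin n → k), g t = t' := by
  have hex : ∀ (x : Fin n → k), x ≠ 0 → ∃ G : (Fin n → k) →ₗ[k] k, G x = 1 := by
    intro x hx
    obtain ⟨i, hi⟩ : ∃ i, x i ≠ 0 := by
      by_contra hc
      push_neg at hc
      exact hx (funext hc)
    exact ⟨(x i)⁻¹ • LinearMap.proj i, by simp [inv_mul_cancel₀ hi]⟩
  obtain ⟨G, Gx, Gy⟩ : ∃ G : (Fin n → k) →ₗ[k] k, G t = 1 ∧ G t' ≠ 0 := by
    obtain ⟨u, ux⟩ := hex t ht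
    rcases ne_or_eq (u t') 0 with uy | uy
    · exact ⟨u, ux, uy⟩
    obtain ⟨v, vy⟩ := hex t' ht'
    rcases ne_or_eq (v t) 0 with vx | vx
    · exact ⟨(v t)⁻¹ • v, by simp [inv_mul_cancel₀ vx],
        by simp [vx, vy]⟩
    · exact ⟨u + v, by simp [ux, vx], by simp [uy, vy]⟩
  refine ⟨{ toFun := fun z => z + G z • (t' - t)
            invFun := fun z => z + ((G t')⁻¹ * G z) • (t - t')
            map_add' := fun a b => by simp [add_smul]; abel
            map_smul' := by intros; simp [smul_smul]
            left_inv := ?_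
            right_inv := ?_ }, ?_⟩
  · intro z
    simp only [map_add, map_smul, map_sub, Gx, smul_eq_mul]
    have h1 : (G t')⁻¹ * (G z + G z * (G t' - 1)) = G z := by
      field_simp; ring
    rw [h1]
    module
  · intro z
    simp only [map_add, map_smul, map_sub, Gx, smul_eq_mul]
    have h1 : G z + (G t')⁻¹ * G z * (1 - G t') = (G t')⁻¹ * G z := by
      field_simp; ring
    rw [h1]
    module
  · show t + G t • (t' - t) = t'
    rw [Gx]
    module

variable {k : Type*} [CommRing k] {n : ℕ}

/-- linear substitution AlgHom -/
noncomputable def Fsub (h : (Fin n → k) →ₗ[k] (Fin n → k)) :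
    MvPolynomial (Fin n) k →ₐ[k] MvPolynomial (Fin n) k :=
  aeval (fun i : Fin n => ∑ j : Fin n, h (fun l => if i = l then 1 else 0) j • X j)

lemma Fsub_linear (h : (Fin n → k) →ₗ[k] (Fin n → k)) (c : Fin n → k) :
    Fsub h (∑ i : Fin n, c i • X i) = ∑ j : Fin n, h c j • X j := by
  unfold Fsub
  rw [map_sum]
  simp_rw [map_smul, aeval_X, Finset.smul_sum, smul_smul]
  rw [Finset.sum_comm]
  apply Finset.sum_congr rfl
  intro j _
  rw [LinearMap.pi_apply_eq_sum_univ h c, ← Finset.sum_smul]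
  congr 1
  rw [Finset.sum_apply]
  simp [smul_eq_mul]

lemma X_eq_sum (i : Fin n) :
    (X i : MvPolynomial (Fin n) k) = ∑ j : Fin n, (if i = j then (1:k) else 0) • X j := by
  simp [ite_smul]

lemma Fsub_X (h : (Fin n → k) →ₗ[k] (Fin n → k)) (i : Fin n) :
    Fsub h (X i) = ∑ j : Fin n, h (fun l => if i = l then 1 else 0) j • X j := by
  unfold Fsub; rw [aeval_X]

lemma Fsub_comp_X (g h : (Fin n → k) →ₗ[k] (Fin n → k)) (i : Fin n) :
    Fsub h (Fsub g (X i)) = ∑ j : Fin n, (h (g (fun l => if i = l then 1 else 0))) j • X j := by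
  rw [Fsub_X, show (∑ j : Fin n, g (fun l => if i = l then 1 else 0) j • (X j : MvPolynomial (Fin n) k)) = ∑ j : Fin n, (g (fun l => if i = l then 1 else 0)) j • X j from rfl,
    Fsub_linear h (g (fun l => if i = l then 1 else 0))]

noncomputable def Gsub (g : (Fin n → k) ≃ₗ[k] (Fin n → k)) :
    MvPolynomial (Fin n) k ≃ₐ[k] MvPolynomial (Fin n) k :=
  AlgEquiv.ofAlgHom (Fsub g.toLinearMap) (Fsub g.symm.toLinearMap)
    (by
      apply MvPolynomial.algHom_ext
      intro i
      rw [AlgHom.comp_apply, AlgHom.id_apply, Fsub_comp_X]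
      simp only [LinearEquiv.coe_coe, LinearEquiv.apply_symm_apply]
      exact (X_eq_sum i).symm)
    (by
      apply MvPolynomial.algHom_ext
      intro i
      rw [AlgHom.comp_apply, AlgHom.id_apply, Fsub_comp_X]
      simp only [LinearEquiv.coe_coe, LinearEquiv.symm_apply_apply]
      exact (X_eq_sum i).symm)

lemma Gsub_X (g : (Fin n → k) ≃ₗ[k] (Fin n → k)) (i : Fin n) :
    Gsub g (X i) = ∑ j : Fin n, g (fun l => if i = l then 1 else 0) j • X j :=
  Fsub_X _ i

lemma Gsub_linear (g : (Fin n → k) ≃ₗ[k] (Fin n → k)) (c : Fin n → k) :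
    Gsub g (∑ i : Fin n, c i • X i) = ∑ j : Fin n, g c j • X j :=
  Fsub_linear _ c

/-- an algebra automorphism sending variables to degree-1 elements commutes
with the sign involution -/
lemma sigma_comm {f : MvPolynomial (Fin n) k ≃ₐ[k] MvPolynomial (Fin n) k}
    (hf : ∀ i : Fin n, (f (X i)).IsHomogeneous 1) (a : MvPolynomial (Fin n) k) :
    aeval (fun i : Fin n => -X i) (f a) = f (aeval (fun i : Fin n => -X i) a) := by
  have : (aeval (fun i : Fin n => -X i : Fin n → MvPolynomial (Fin n) k)).comp f.toAlgHom
      = f.toAlgHom.comp (aeval (fun i : Fin n => -X i)) := by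
    apply MvPolynomial.algHom_ext
    intro i
    rw [AlgHom.comp_apply, AlgHom.comp_apply]
    simp only [AlgEquiv.toAlgHom_eq_coe, AlgHom.coe_coe, aeval_X, map_neg]
    have h := sigma_homog (hf i); rw [pow_one, neg_one_smul] at h; exact h
  have h2 := DFunLike.congr_fun this a
  simpa using h2

end Aux

/-- Two DG polynomial algebras `(A, D)` (parameters `t`) and `(A, D')`
(parameters `t'`) are DG-isomorphic if and only if (`t = 0 ↔ t' = 0`). -/
theorem stmt_3 (k : Type*) [Field k] [CharZero k] (n : ℕ) (t t' : Fin n → k)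
    (D D' : MvPolynomial (Fin n) k →ₗ[k] MvPolynomial (Fin n) k)
    (hLeib : ∀ (d : ℕ) (a b : MvPolynomial (Fin n) k), a.IsHomogeneous d →
      D (a * b) = D a * b + ((-1 : k) ^ d) • (a * D b))
    (hLeib' : ∀ (d : ℕ) (a b : MvPolynomial (Fin n) k), a.IsHomogeneous d →
      D' (a * b) = D' a * b + ((-1 : k) ^ d) • (a * D' b))
    (hD : ∀ i : Fin n, D (X i) = X i * ∑ j : Fin n, t j • X j)
    (hD' : ∀ i : Fin n, D' (X i) = X i * ∑ j : Fin n, t' j • X j) :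
    (∃ f : MvPolynomial (Fin n) k ≃ₐ[k] MvPolynomial (Fin n) k,
        (∀ i : Fin n, (f (X i)).IsHomogeneous 1) ∧
        (∀ a : MvPolynomial (Fin n) k, f (D a) = D' (f a))) ↔
    (t = 0 ↔ t' = 0) := by
  have hDc := D_char t D hLeib hD
  have hDc' := D_char t' D' hLeib' hD'
  constructor
  · rintro ⟨f, hhom, hcomm⟩
    rcases Nat.eq_zero_or_pos n with h0 | hpos
    · subst h0
      have h1 : t = 0 := funext fun i => i.elim0
      have h2 : t' = 0 := funext fun i => i.elim0
      simp [h1, h2]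
    · set i0 : Fin n := ⟨0, hpos⟩
      -- compute both sides of hcomm (X i0)
      have key := hcomm (X i0)
      rw [hD i0, map_mul] at key
      have hσ : aeval (fun i : Fin n => -X i) (f (X i0)) = -(f (X i0)) := by
        rw [sigma_homog (hhom i0), pow_one, neg_one_smul]
      rw [hDc' (f (X i0)), hσ, sub_neg_eq_add] at key
      have h3 : (2⁻¹ : k) • ((∑ j : Fin n, t' j • X j) * (f (X i0) + f (X i0)))
          = f (X i0) * ∑ j : Fin n, t' j • X j := by
        rw [smul_eq_C_mul]
        have h4 : (C (2⁻¹ : k) : MvPolynomial (Fin n) k) * 2 = 1 := by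
          rw [show (2 : MvPolynomial (Fin n) k) = C 2 by rw [map_ofNat], ← map_mul]
          norm_num
        linear_combination ((∑ j : Fin n, t' j • X j) * f (X i0)) * h4
      rw [h3] at key
      -- cancel f (X i0)
      have hX0 : f (X i0) ≠ 0 := by
        intro h
        exact X_ne_zero i0 (f.injective (by rw [h, map_zero]))
      have hfw : f (∑ j : Fin n, t j • X j) = ∑ j : Fin n, t' j • X j :=
        mul_left_cancel₀ hX0 key
      constructor
      · intro h
        have : f (∑ j : Fin n, t j • X j) = 0 := by
          rw [(w_zero t).mpr h, map_zero]
        exact (w_zero t').mp (by rw [← hfw, this])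
      · intro h
        have : f (∑ j : Fin n, t j • X j) = 0 := by rw [hfw, (w_zero t').mpr h]
        exact (w_zero t).mp (f.injective (by rw [this, map_zero]))
  · intro hiff
    by_cases ht : t = 0
    · have ht' : t' = 0 := hiff.mp ht
      refine ⟨AlgEquiv.refl, fun i => isHomogeneous_X _ _, fun a => ?_⟩
      have hD0 : D a = 0 := by rw [hDc a, ht]; simp
      have hD0' : D' a = 0 := by rw [hDc' a, ht']; simp
      simp [hD0, hD0']
    · have ht' : t' ≠ 0 := fun h => ht (hiff.mpr h)
      obtain ⟨g, hg⟩ := exists_lequiv ht ht'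
      refine ⟨Gsub g, fun i => ?_, fun a => ?_⟩
      · rw [Gsub_X]
        apply IsHomogeneous.sum
        intro j _
        rw [smul_eq_C_mul]
        exact isHomogeneous_C_mul_X _ _
      · have hhom : ∀ i : Fin n, ((Gsub g) (X i)).IsHomogeneous 1 := by
          intro i
          rw [Gsub_X]
          apply IsHomogeneous.sum
          intro j _
          rw [smul_eq_C_mul]
          exact isHomogeneous_C_mul_X _ _
        have hfw : Gsub g (∑ j : Fin n, t j • X j) = ∑ j : Fin n, t' j • X j := by
          rw [Gsub_linear, hg]
        rw [hDc a, hDc' (Gsub g a), map_smul, map_mul, map_sub, hfw,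
          sigma_comm hhom a]
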